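/- Let C be an [n,k]_q linear code, let H be a parity-check matrix for C (rows spanning the dual code), and let S ⊆ {0,...,n-1} with |S| ≤ d-1 where d is the minimum distance of C. Then the matrix H(S), obtained from H by deleting all rows having a nonzero entry in some coordinate of S and deleting the columns indexed by S, is a parity-check matrix for the punctured code C punctured on S if and only if rank(H(S)) = n - k - |S| over F_q. -/

import Mathlib

variable {F : Type} [Field F] [Fintype F] [DecidableEq F]

/-- The dual code of a linear code `C`. -/
def dualCode {ι : Type} [Fintype ι] (C : Submodule F (ι → F)) : Submodule F (ι → F) where
  carrier := {x | ∀ c ∈ C, ∑ i, x i * c i = 0}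
  add_mem' := by
    intro a b ha hb c hc
    simp only [Set.mem_setOf_eq, Pi.add_apply] at *
    simp [add_mul, Finset.sum_add_distrib, ha c hc, hb c hc]
  zero_mem' := by
    intro c hc
    simp
  smul_mem' := by
    intro a x hx c hc
    simp only [Set.mem_setOf_eq, Pi.smul_apply, smul_eq_mul, mul_assoc,
      ← Finset.mul_sum, hx c hc, mul_zero]

omit [Fintype F] [DecidableEq F] in
lemma mem_dualCode {ι : Type} [Fintype ι] (C : Submodule F (ι → F)) (x : ι → F) :
    x ∈ dualCode C ↔ ∀ c ∈ C, ∑ i, x i * c i = 0 := Iff.rfl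

lemma dualCode_eq_orthogonal {ι : Type} [Fintype ι] [DecidableEq ι] (C : Submodule F (ι → F)) :
    dualCode C = (Matrix.toBilin' (1 : Matrix ι ι F)).orthogonal C := by
  ext x
  simp only [mem_dualCode, LinearMap.BilinForm.mem_orthogonal_iff, LinearMap.BilinForm.IsOrtho,
    Matrix.toBilin'_apply', Matrix.one_mulVec, dotProduct]
  exact ⟨fun h c hc => by rw [← h c hc]; exact Finset.sum_congr rfl fun i _ => mul_comm _ _,
    fun h c hc => by rw [← h c hc]; exact Finset.sum_congr rfl fun i _ => mul_comm _ _⟩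

lemma finrank_dualCode {ι : Type} [Fintype ι] [DecidableEq ι] (C : Submodule F (ι → F)) :
    Module.finrank F (dualCode C) = Fintype.card ι - Module.finrank F C := by
  rw [dualCode_eq_orthogonal]
  have hnd : (Matrix.toBilin' (1 : Matrix ι ι F)).Nondegenerate :=
    (Matrix.nondegenerate_of_det_ne_zero (by simp)).toBilin'
  have hrefl : (Matrix.toBilin' (1 : Matrix ι ι F)).IsRefl := by
    intro x y h
    simp only [Matrix.toBilin'_apply', Matrix.one_mulVec, dotProduct] at *
    rw [← h]
    exact Finset.sum_congr rfl fun i _ => mul_comm _ _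
  rw [LinearMap.BilinForm.finrank_orthogonal hnd]
  simp [Module.finrank_fintype_fun_eq_card]

/-- `d` is the minimum distance of the code `D`. -/
def IsMinDist {ι : Type} [Fintype ι] (D : Submodule F (ι → F)) (d : ℕ) : Prop :=
  (∀ c ∈ D, c ≠ 0 → d ≤ hammingNorm c) ∧ ∃ c ∈ D, c ≠ 0 ∧ hammingNorm c = d

/-- `H(S)`: delete the rows of `H` with a nonzero entry in `S`, and the columns in `S`. -/
def subMat {m n : ℕ} (H : Matrix (Fin m) (Fin n) F) (S : Finset (Fin n)) :
    Matrix {i : Fin m // ∀ j ∈ S, H i j = 0} {j : Fin n // j ∉ S} F :=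
  Matrix.of fun i j => H i.1 j.1

/-- `H(S)` is a parity-check matrix for the punctured code iff its rank is `n-k-|S|`. -/
theorem stmt_3 (n k d mrows : ℕ)
    (C : Submodule F (Fin n → F)) (hk : Module.finrank F C = k) (hd : IsMinDist C d)
    (H : Matrix (Fin mrows) (Fin n) F)
    (hH : Submodule.span F (Set.range fun i => H i) = dualCode C)
    (S : Finset (Fin n)) (hS : S.card ≤ d - 1) :
    (Submodule.span F (Set.range fun i => (subMat H S) i) =
        dualCode (C.map (LinearMap.funLeft F F (fun j : {j : Fin n // j ∉ S} => j.1)))) ↔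
      (subMat H S).rank = n - k - S.card := by
  classical
  set f := LinearMap.funLeft F F (fun j : {j : Fin n // j ∉ S} => j.1) with hf
  -- d ≥ 1
  obtain ⟨c₀, hc₀C, hc₀ne, hc₀d⟩ := hd.2
  have hd1 : 1 ≤ d := by
    rw [← hc₀d]
    exact Nat.one_le_iff_ne_zero.mpr (fun h => hc₀ne (hammingNorm_eq_zero.mp h))
  -- puncturing is injective on C
  have hker : LinearMap.ker (f.domRestrict C) = ⊥ := by
    rw [LinearMap.ker_eq_bot']
    rintro ⟨c, hc⟩ hc0
    have hcz : ∀ j : Fin n, j ∉ S → c j = 0 := by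
      intro j hj
      have := congrFun hc0 ⟨j, hj⟩
      simpa [hf, LinearMap.funLeft_apply] using this
    by_contra hne
    have hcne : c ≠ 0 := fun h => hne (by simpa using h)
    have h1 : d ≤ hammingNorm c := hd.1 c hc hcne
    have h2 : hammingNorm c ≤ S.card := by
      refine Finset.card_le_card ?_
      intro j hj
      simp only [Finset.mem_filter, Finset.mem_univ, true_and] at hj
      by_contra hjS
      exact hj (hcz j hjS)
    omega
  -- dimension of punctured code is k
  have hrank : Module.finrank F (C.map f) = k := by
    have := LinearMap.finrank_range_add_finrank_ker (f.domRestrict C)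
    rw [LinearMap.range_domRestrict, hker, finrank_bot, add_zero, hk] at this
    exact this
  -- dimension of the dual of the punctured code
  have hcard : Fintype.card {j : Fin n // j ∉ S} = n - S.card := by
    simp [Fintype.card_subtype_compl]
  have hdualrank : Module.finrank F (dualCode (C.map f)) = n - k - S.card := by
    rw [finrank_dualCode, hcard, hrank, Nat.sub_sub, Nat.sub_sub, Nat.add_comm]
  -- row span is contained in the dual
  have hle : Submodule.span F (Set.range fun i => (subMat H S) i) ≤ dualCode (C.map f) := by
    rw [Submodule.span_le]
    rintro _ ⟨i, rfl⟩
    rintro _ ⟨c, hc, rfl⟩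
    have hHi : H i.1 ∈ dualCode C := hH ▸ Submodule.subset_span ⟨i.1, rfl⟩
    have h0 : ∑ j : Fin n, H i.1 j * c j = 0 := hHi c hc
    have hsplit : ∑ j : Fin n, H i.1 j * c j
        = ∑ j ∈ S, H i.1 j * c j + ∑ j ∈ Sᶜ, H i.1 j * c j := by
      rw [Finset.sum_add_sum_compl]
    have hSzero : ∑ j ∈ S, H i.1 j * c j = 0 :=
      Finset.sum_eq_zero fun j hj => by rw [i.2 j hj, zero_mul]
    have : ∑ j : {j : Fin n // j ∉ S}, H i.1 j.1 * c j.1 = ∑ j ∈ Sᶜ, H i.1 j * c j := by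
      rw [← Finset.sum_subtype Sᶜ (fun j => by simp) (fun j => H i.1 j * c j)]
    calc ∑ j : {j : Fin n // j ∉ S}, (subMat H S) i j * (f c) j
        = ∑ j ∈ Sᶜ, H i.1 j * c j := by
          rw [← this]; rfl
      _ = 0 := by
          have := hsplit
          rw [h0, hSzero, zero_add] at this
          exact this.symm
  have hspanrank : (subMat H S).rank
      = Module.finrank F (Submodule.span F (Set.range fun i => (subMat H S) i)) :=
    Matrix.rank_eq_finrank_span_row _
  constructor
  · intro heq
    rw [hspanrank, heq, hdualrank]
  · intro hr
    refine Submodule.eq_of_le_of_finrank_eq hle ?_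
    rw [← hspanrank, hr, hdualrank]
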